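/- Let d ≥ 2 and α ≥ 2 be integers. Let e¹ ∈ (ℤ_d)^α be the vector with 1 in the first coordinate and 0 elsewhere, and let z_α ∈ Sym_α be the cycle (1,2,…,α) if α is odd and (2,3,…,α) if α is even. Then the two elements (e¹; z_α) and (e¹; (1,2)) generate the generalized symmetric group ℤ_d ≀ Sym_α. -/

import Mathlib

/-- A permutation of coordinates, as a multiplicative automorphism of
`(ℤ_d)^α` (written multiplicatively): `(w^π)_i = w_{π⁻¹(i)}`. -/
def permCoordAut (α : ℕ) (M : Type*) [Monoid M] (π : Equiv.Perm (Fin α)) :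
    MulAut (Fin α → M) :=
  { Equiv.arrowCongr π (Equiv.refl M) with
    map_mul' := fun _ _ => rfl }

/-- The action of `Sym_α` on `(ℤ_d)^α` permuting the coordinates. -/
def wreathAct (d α : ℕ) : Equiv.Perm (Fin α) →* MulAut (Fin α → Multiplicative (ZMod d)) where
  toFun := permCoordAut α (Multiplicative (ZMod d))
  map_one' := by ext v; rfl
  map_mul' := fun π ρ => by ext v; rfl

/-- The generalized symmetric group `ℤ_d ≀ Sym_α = (ℤ_d)^α ⋊ Sym_α`, where
`Sym_α` acts by permuting coordinates. -/
abbrev GenSym (d α : ℕ) :=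
  SemidirectProduct (Fin α → Multiplicative (ZMod d)) (Equiv.Perm (Fin α)) (wreathAct d α)

/-- The permutation `z_α ∈ Sym_α`: the cycle `(1,2,…,α)` if `α` is odd, and the
cycle `(2,3,…,α)` if `α` is even (here in 0-based notation on `Fin α`:
`finRotate α` is the full cycle, and `Equiv.swap 0 1 * finRotate α` is the
cycle moving every point except the first). -/
def zcycle : (α : ℕ) → Equiv.Perm (Fin α)
  | 0 => 1
  | 1 => 1
  | (m + 2) =>
    if Odd (m + 2) then finRotate (m + 2)
    else Equiv.swap 0 1 * finRotate (m + 2)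

open Equiv Equiv.Perm Finset Fin.NatCast

section AuxPerm

lemma finRotate_pow_apply {n : ℕ} (k : ℕ) (i : Fin (n+1)) :
    ((finRotate (n+1))^k) i = i + (k : Fin (n+1)) := by
  induction k generalizing i with
  | zero => simp
  | succ k ih =>
    rw [pow_succ, Equiv.Perm.mul_apply, finRotate_succ_apply, ih]
    push_cast
    abel

lemma finRotate_pow_self {n : ℕ} : (finRotate (n+1))^(n+1) = 1 := by
  ext i
  rw [finRotate_pow_apply]
  simp

lemma decompose_zero_mul {n : ℕ} (e f : Perm (Fin (n+1))) :
    Equiv.Perm.decomposeFin.symm (0, e) * Equiv.Perm.decomposeFin.symm (0, f)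
      = Equiv.Perm.decomposeFin.symm (0, e * f) := by
  ext i
  refine Fin.cases ?_ (fun x => ?_) i <;>
    simp [Equiv.Perm.mul_apply]

lemma decompose_zero_pow {n : ℕ} (e : Perm (Fin (n+1))) (k : ℕ) :
    (Equiv.Perm.decomposeFin.symm (0, e))^k = Equiv.Perm.decomposeFin.symm (0, e^k) := by
  induction k with
  | zero => simp [Equiv.Perm.one_def]
  | succ k ih => rw [pow_succ, pow_succ, ih, decompose_zero_mul]

lemma swap01_mul_finRotate {n : ℕ} :
    swap (0 : Fin (n+2)) 1 * finRotate (n+2)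
      = Equiv.Perm.decomposeFin.symm (0, finRotate (n+1)) := by
  rw [finRotate_succ_eq_decomposeFin]
  ext i
  refine Fin.cases ?_ (fun x => ?_) i <;>
    simp [Equiv.Perm.mul_apply]

lemma closure_of_swaps_zero {n : ℕ} {C : Subgroup (Perm (Fin (n+2)))}
    (h : ∀ j : Fin (n+2), swap 0 j ∈ C) : C = ⊤ := by
  rw [eq_top_iff, ← Equiv.Perm.closure_isSwap, Subgroup.closure_le]
  rintro τ ⟨y, w, hyw, rfl⟩
  exact SubmonoidClass.swap_mem_trans C (swap_comm y 0 ▸ h y) (h w)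

lemma closure_zs_even {m : ℕ} :
    Subgroup.closure {Equiv.Perm.decomposeFin.symm (0, finRotate (m+1)),
      swap (0 : Fin (m+2)) 1} = ⊤ := by
  set z : Perm (Fin (m+2)) := Equiv.Perm.decomposeFin.symm (0, finRotate (m+1)) with hzdef
  set C := Subgroup.closure {z, swap (0 : Fin (m+2)) 1} with hC
  have hz : z ∈ C := Subgroup.subset_closure (Set.mem_insert _ _)
  have hz0 : z 0 = 0 := Equiv.Perm.decomposeFin_symm_apply_zero 0 (finRotate (m+1))
  have key : ∀ k : ℕ, swap (0 : Fin (m+2)) ((z^k) 1) ∈ C := by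
    intro k
    induction k with
    | zero =>
      rw [pow_zero, Equiv.Perm.one_apply]
      exact Subgroup.subset_closure (Set.mem_insert_of_mem _ rfl)
    | succ k ih =>
      have h2 := swap_apply_apply z 0 ((z^k) 1)
      rw [hz0] at h2
      rw [pow_succ', Equiv.Perm.mul_apply, h2]
      exact C.mul_mem (C.mul_mem hz ih) (C.inv_mem hz)
  apply closure_of_swaps_zero
  intro j
  refine Fin.cases ?_ (fun x => ?_) j
  · rw [swap_self]
    exact C.one_mem
  · have hk := key x.val
    rw [hzdef, decompose_zero_pow, ← Fin.succ_zero_eq_one,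
      Equiv.Perm.decomposeFin_symm_apply_succ] at hk
    simp only [swap_self, Equiv.refl_apply] at hk
    rw [finRotate_pow_apply, zero_add, Fin.cast_val_eq_self] at hk
    exact hk

lemma closure_zs_odd {m : ℕ} :
    Subgroup.closure {finRotate (m+2), swap (0 : Fin (m+2)) 1} = ⊤ := by
  have := Equiv.Perm.closure_cycle_adjacent_swap (σ := finRotate (m+2))
    isCycle_finRotate support_finRotate 0
  rw [finRotate_succ_apply, zero_add] at this
  exact this

lemma closure_zcycle_swap (m : ℕ) :
    Subgroup.closure {zcycle (m+2), swap (0 : Fin (m+2)) 1} = ⊤ := by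
  by_cases h : Odd (m+2)
  · have hz : zcycle (m+2) = finRotate (m+2) := by simp [zcycle, h]
    rw [hz]
    exact closure_zs_odd
  · have hz : zcycle (m+2) = Equiv.Perm.decomposeFin.symm (0, finRotate (m+1)) := by
      simp only [zcycle, if_neg h]
      exact swap01_mul_finRotate
    rw [hz]
    exact closure_zs_even

lemma exists_perm_zero_one {n : ℕ} (i j : Fin (n+2)) (hij : i ≠ j) :
    ∃ π : Perm (Fin (n+2)), π 0 = i ∧ π 1 = j := by
  have hk0 : swap 0 i j ≠ 0 := by
    intro h
    apply hij
    have := congrArg (swap 0 i) h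
    rwa [Equiv.swap_apply_self, Equiv.swap_apply_left, eq_comm] at this
  refine ⟨swap 0 i * swap 1 (swap 0 i j), ?_, ?_⟩
  · rw [Equiv.Perm.mul_apply,
      swap_apply_of_ne_of_ne (by simp : (0 : Fin (n+2)) ≠ 1) (Ne.symm hk0),
      Equiv.swap_apply_left]
  · rw [Equiv.Perm.mul_apply, Equiv.swap_apply_left, Equiv.swap_apply_self]

end AuxPerm

section AuxGenSym

variable {d α : ℕ}

lemma wreathAct_apply (π : Perm (Fin α)) (v : Fin α → Multiplicative (ZMod d)) (i : Fin α) :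
    wreathAct d α π v i = v (π⁻¹ i) := rfl

lemma wreathAct_mulSingle (π : Perm (Fin α)) (x : Multiplicative (ZMod d)) (i : Fin α) :
    wreathAct d α π (Pi.mulSingle i x) = Pi.mulSingle (π i) x := by
  funext j
  rw [wreathAct_apply, Pi.mulSingle_apply, Pi.mulSingle_apply]
  simp only [Equiv.Perm.inv_eq_iff_eq]

lemma genSym_conj_inl (h : GenSym d α) (w : Fin α → Multiplicative (ZMod d)) :
    h * SemidirectProduct.inl w * h⁻¹ = SemidirectProduct.inl (wreathAct d α h.right w) := by
  ext i
  · simp only [SemidirectProduct.mul_left, SemidirectProduct.inv_left,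
      SemidirectProduct.left_inl, SemidirectProduct.mul_right, SemidirectProduct.right_inl,
      mul_one, Pi.mul_apply, wreathAct_apply, Pi.inv_apply, inv_inv,
      Equiv.Perm.coe_inv, Equiv.apply_symm_apply]
    rw [mul_right_comm]
    simp
  · simp [SemidirectProduct.mul_right, SemidirectProduct.inv_right]

lemma genSym_pair_pow (v : Fin α → Multiplicative (ZMod d)) (φ : Perm (Fin α)) (n : ℕ) :
    ((⟨v, φ⟩ : GenSym d α))^n
      = ⟨∏ k ∈ Finset.range n, wreathAct d α (φ^k) v, φ^n⟩ := by
  induction n with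
  | zero => simp
  | succ n ih =>
    rw [pow_succ', ih, SemidirectProduct.mul_def]
    congr 1
    · rw [Finset.prod_range_succ', pow_zero, map_one, MulAut.one_apply, map_prod, mul_comm]
      show (∏ k ∈ Finset.range n, wreathAct d α φ (wreathAct d α (φ^k) v)) * v
          = (∏ k ∈ Finset.range n, wreathAct d α (φ^(k+1)) v) * v
      congr 1
    · exact (pow_succ' φ n).symm

end AuxGenSym

private lemma cg_pair {G : Type*} [CommGroup G] (a b c : G) :
    (a*b) * (b*c)⁻¹ * (c*a) = a*a := by
  simp [mul_inv, mul_comm, mul_left_comm, mul_assoc]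

private lemma cg_diff {G : Type*} [CommGroup G] (a b c : G) :
    (a*c) * (b*c)⁻¹ = a * b⁻¹ := by
  simp [mul_inv, mul_comm, mul_left_comm, mul_assoc]

/-- Let d ≥ 2 and α ≥ 2.  The two elements `(e¹; z_α)` and `(e¹; (1,2))`
generate the generalized symmetric group `ℤ_d ≀ Sym_α`, where `e¹ ∈ (ℤ_d)^α`
has 1 in the first coordinate and 0 elsewhere. -/
theorem genSym_generated_by_two (d α : ℕ) (hd : 2 ≤ d) (hα : 2 ≤ α) :
    Subgroup.closure
      ({⟨fun i => if i = ⟨0, by omega⟩ then Multiplicative.ofAdd (1 : ZMod d) else 1,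
          zcycle α⟩,
        ⟨fun i => if i = ⟨0, by omega⟩ then Multiplicative.ofAdd (1 : ZMod d) else 1,
          Equiv.swap ⟨0, by omega⟩ ⟨1, by omega⟩⟩} : Set (GenSym d α)) = ⊤ := by
  haveI : NeZero d := ⟨by omega⟩
  obtain ⟨m, rfl⟩ : ∃ m, α = m + 2 := ⟨α - 2, by omega⟩
  set e0 : Fin (m+2) → Multiplicative (ZMod d) :=
    Pi.mulSingle 0 (Multiplicative.ofAdd (1 : ZMod d)) with he0
  have hfun : (fun i : Fin (m+2) =>
      if i = ⟨0, by omega⟩ then Multiplicative.ofAdd (1 : ZMod d) else 1) = e0 := by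
    funext j
    rw [he0, Pi.mulSingle_apply, Fin.mk_zero]
  set z : Perm (Fin (m+2)) := zcycle (m+2) with hzdef
  set s : Perm (Fin (m+2)) := swap 0 1 with hsdef
  have hswap : Equiv.swap (⟨0, by omega⟩ : Fin (m+2)) ⟨1, by omega⟩ = s := by
    rw [hsdef, Fin.mk_zero, Fin.mk_one]
  rw [hfun, hswap]
  set A : GenSym d (m+2) := ⟨e0, z⟩ with hAdef
  set B : GenSym d (m+2) := ⟨e0, s⟩ with hBdef
  set H := Subgroup.closure ({A, B} : Set (GenSym d (m+2))) with hHdef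
  have hAH : A ∈ H := Subgroup.subset_closure (Set.mem_insert _ _)
  have hBH : B ∈ H := Subgroup.subset_closure (Set.mem_insert_of_mem _ rfl)
  -- Step 1: the permutation parts generate all of Sym
  have hmap : Subgroup.map (SemidirectProduct.rightHom) H = ⊤ := by
    rw [hHdef, MonoidHom.map_closure]
    have himg : SemidirectProduct.rightHom '' ({A, B} : Set (GenSym d (m+2))) = {z, s} := by
      rw [Set.image_insert_eq, Set.image_singleton]
      rfl
    rw [himg, hsdef]
    exact closure_zcycle_swap m
  have hsurj : ∀ φ : Perm (Fin (m+2)), ∃ h ∈ H, h.right = φ := by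
    intro φ
    have : φ ∈ Subgroup.map (SemidirectProduct.rightHom) H := hmap ▸ Subgroup.mem_top φ
    obtain ⟨h, hh, hr⟩ := Subgroup.mem_map.mp this
    exact ⟨h, hh, hr⟩
  -- Step 2: conjugation closure of pure vectors
  have hconj : ∀ w, SemidirectProduct.inl w ∈ H → ∀ π : Perm (Fin (m+2)),
      SemidirectProduct.inl (wreathAct d (m+2) π w) ∈ H := by
    intro w hw π
    obtain ⟨h, hh, hr⟩ := hsurj π
    rw [← hr, ← genSym_conj_inl]
    exact H.mul_mem (H.mul_mem hh hw) (H.inv_mem hh)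
  -- b² = inl (e⁰ e¹)
  have hBB : B * B = SemidirectProduct.inl
      (e0 * Pi.mulSingle (1 : Fin (m+2)) (Multiplicative.ofAdd (1 : ZMod d))) := by
    have h1 : wreathAct d (m+2) s e0
        = Pi.mulSingle (1 : Fin (m+2)) (Multiplicative.ofAdd (1 : ZMod d)) := by
      rw [he0, wreathAct_mulSingle, hsdef, Equiv.swap_apply_left]
    rw [hBdef, SemidirectProduct.mul_def]
    show (⟨e0 * wreathAct d (m+2) s e0, s * s⟩ : GenSym d (m+2)) = _
    rw [h1, hsdef, Equiv.swap_mul_self]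
    rfl
  have hpair01 : SemidirectProduct.inl
      (e0 * Pi.mulSingle (1 : Fin (m+2)) (Multiplicative.ofAdd (1 : ZMod d))) ∈ H :=
    hBB ▸ H.mul_mem hBH hBH
  -- pairs
  have hpair : ∀ i j : Fin (m+2), i ≠ j → SemidirectProduct.inl
      (Pi.mulSingle i (Multiplicative.ofAdd (1 : ZMod d))
        * Pi.mulSingle j (Multiplicative.ofAdd (1 : ZMod d))) ∈ H := by
    intro i j hij
    obtain ⟨π, hπ0, hπ1⟩ := exists_perm_zero_one i j hij
    have := hconj _ hpair01 π
    rw [he0, map_mul, wreathAct_mulSingle, wreathAct_mulSingle, hπ0, hπ1] at this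
    exact this
  -- product membership helper
  have hprodmem : ∀ (f : Fin (m+2) → (Fin (m+2) → Multiplicative (ZMod d)))
      (t : Finset (Fin (m+2))), (∀ i ∈ t, SemidirectProduct.inl (f i) ∈ H) →
      SemidirectProduct.inl (∏ i ∈ t, f i) ∈ H := by
    intro f t
    induction t using Finset.induction_on with
    | empty =>
      intro _
      rw [Finset.prod_empty, map_one]
      exact H.one_mem
    | @insert a t hnot ih =>
      intro ht
      rw [Finset.prod_insert hnot, map_mul]
      exact H.mul_mem (ht a (Finset.mem_insert_self a t))
        (ih fun i hi => ht i (Finset.mem_insert_of_mem hi))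
  -- an odd power of e0 lies in H
  have hodd : ∃ t : ℕ, 2 * t + 1 ≤ m + 2 ∧ SemidirectProduct.inl (e0 ^ (2*t+1)) ∈ H := by
    by_cases hoddα : Odd (m+2)
    · -- z is the full cycle
      have hzeq : z = finRotate (m+2) := hzdef.trans (by simp [zcycle, hoddα])
      have hm1 : 1 ≤ m := by
        rcases hoddα with ⟨t, ht⟩
        omega
      have hleft : ∏ k ∈ Finset.range (m+2), wreathAct d (m+2) ((z : Perm (Fin (m+2)))^k) e0
          = fun _ => Multiplicative.ofAdd (1 : ZMod d) := by
        have h1 : ∀ k : ℕ, wreathAct d (m+2) (z^k) e0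
            = Pi.mulSingle ((k : Fin (m+2))) (Multiplicative.ofAdd (1 : ZMod d)) := by
          intro k
          rw [he0, wreathAct_mulSingle, hzeq, finRotate_pow_apply, zero_add]
        calc ∏ k ∈ Finset.range (m+2), wreathAct d (m+2) (z^k) e0
            = ∏ k ∈ Finset.range (m+2),
                Pi.mulSingle ((k : Fin (m+2))) (Multiplicative.ofAdd (1 : ZMod d)) :=
              Finset.prod_congr rfl fun k _ => h1 k
          _ = ∏ i : Fin (m+2),
                Pi.mulSingle ((↑(i.val) : Fin (m+2))) (Multiplicative.ofAdd (1 : ZMod d)) :=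
              (Fin.prod_univ_eq_prod_range _ (m+2)).symm
          _ = ∏ i : Fin (m+2), Pi.mulSingle i (Multiplicative.ofAdd (1 : ZMod d)) :=
              Finset.prod_congr rfl fun i _ => by rw [Fin.cast_val_eq_self]
          _ = fun _ => Multiplicative.ofAdd (1 : ZMod d) :=
              Finset.univ_prod_mulSingle _
      have hu : SemidirectProduct.inl
          (fun _ : Fin (m+2) => Multiplicative.ofAdd (1 : ZMod d)) ∈ H := by
        have hApow : A^(m+2) = SemidirectProduct.inl
            (fun _ : Fin (m+2) => Multiplicative.ofAdd (1 : ZMod d)) := by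
          rw [hAdef, genSym_pair_pow, hleft]
          have hz1 : z^(m+2) = 1 := by rw [hzeq]; exact finRotate_pow_self
          rw [hz1]
          rfl
        exact hApow ▸ H.pow_mem hAH (m+2)
      have hdiff : ∀ i : Fin (m+2), i ≠ 0 → SemidirectProduct.inl
          (e0 * (Pi.mulSingle i (Multiplicative.ofAdd (1 : ZMod d)))⁻¹) ∈ H := by
        intro i hi
        set j : Fin (m+2) := if i = 1 then ⟨2, by omega⟩ else 1 with hj
        have h0j : (0 : Fin (m+2)) ≠ j := by
          rw [hj]
          split
          · rw [Fin.ne_iff_vne, Fin.val_zero]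
            simp
          · simp
        have hij : i ≠ j := by
          rw [hj]
          split
          · rename_i hi1
            rw [hi1, Fin.ne_iff_vne, Fin.val_one]
            simp
          · assumption
        have hmem := H.mul_mem (hpair 0 j h0j) (H.inv_mem (hpair i j hij))
        rw [← map_inv, ← map_mul, cg_diff] at hmem
        rw [he0]
        exact hmem
      have hprod : SemidirectProduct.inl (e0^(m+2)) ∈ H := by
        have hmem : SemidirectProduct.inl
            ((fun _ : Fin (m+2) => Multiplicative.ofAdd (1 : ZMod d))
              * ∏ i ∈ Finset.univ.erase (0 : Fin (m+2)),
                  (e0 * (Pi.mulSingle i (Multiplicative.ofAdd (1 : ZMod d)))⁻¹)) ∈ H := by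
          rw [map_mul]
          exact H.mul_mem hu (hprodmem _ _ fun i hi => hdiff i (Finset.mem_erase.mp hi).1)
        have heq : (fun _ : Fin (m+2) => Multiplicative.ofAdd (1 : ZMod d))
            * ∏ i ∈ Finset.univ.erase (0 : Fin (m+2)),
                (e0 * (Pi.mulSingle i (Multiplicative.ofAdd (1 : ZMod d)))⁻¹)
            = e0^(m+2) := by
          rw [Finset.prod_mul_distrib, Finset.prod_const, Finset.prod_inv_distrib]
          rw [show (fun _ : Fin (m+2) => Multiplicative.ofAdd (1 : ZMod d))
              = ∏ i : Fin (m+2), Pi.mulSingle i (Multiplicative.ofAdd (1 : ZMod d)) from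
            (Finset.univ_prod_mulSingle _).symm]
          rw [← Finset.mul_prod_erase Finset.univ _ (Finset.mem_univ (0 : Fin (m+2)))]
          rw [Finset.card_erase_of_mem (Finset.mem_univ _), Finset.card_univ, Fintype.card_fin]
          rw [← he0, mul_mul_mul_comm, mul_inv_cancel, mul_one]
          rw [show m + 2 - 1 = m + 1 from rfl, ← pow_succ']
        rw [← heq]
        exact hmem
      obtain ⟨t, ht⟩ := hoddα
      exact ⟨t, by omega, by rw [show 2*t+1 = m+2 by omega]; exact hprod⟩
    · -- z fixes 0
      have hzeq : z = Equiv.Perm.decomposeFin.symm (0, finRotate (m+1)) :=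
        hzdef.trans (by simp only [zcycle, if_neg hoddα]; exact swap01_mul_finRotate)
      have hApow : A^(m+1) = SemidirectProduct.inl (e0^(m+1)) := by
        rw [hAdef, genSym_pair_pow]
        have hleft : ∏ k ∈ Finset.range (m+1), wreathAct d (m+2) (z^k) e0 = e0^(m+1) := by
          have h1 : ∀ k : ℕ, wreathAct d (m+2) (z^k) e0 = e0 := by
            intro k
            rw [he0, wreathAct_mulSingle, hzeq, decompose_zero_pow,
              Equiv.Perm.decomposeFin_symm_apply_zero]
          rw [Finset.prod_congr rfl fun k _ => h1 k, Finset.prod_const, Finset.card_range]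
        have hz1 : z^(m+1) = 1 := by
          rw [hzeq, decompose_zero_pow, finRotate_pow_self,
            Equiv.Perm.decomposeFin_symm_of_one, swap_self]
          rfl
        rw [hleft, hz1]
        rfl
      obtain ⟨t, ht⟩ := Nat.not_odd_iff_even.mp hoddα
      refine ⟨m/2, by omega, ?_⟩
      have : 2 * (m/2) + 1 = m + 1 := by omega
      rw [this]
      exact hApow ▸ H.pow_mem hAH (m+1)
  -- e0 squared, when m ≥ 1
  have hsq : 1 ≤ m → SemidirectProduct.inl (e0 ^ 2) ∈ H := by
    intro hm
    have h01 : (0 : Fin (m+2)) ≠ 1 := by simp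
    have h12 : (1 : Fin (m+2)) ≠ ⟨2, by omega⟩ := by
      rw [Fin.ne_iff_vne, Fin.val_one]
      simp
    have h20 : (⟨2, by omega⟩ : Fin (m+2)) ≠ 0 := by
      rw [Fin.ne_iff_vne, Fin.val_zero]
      simp
    have hmem := H.mul_mem (H.mul_mem (hpair 0 1 h01)
      (H.inv_mem (hpair 1 ⟨2, by omega⟩ h12))) (hpair ⟨2, by omega⟩ 0 h20)
    rw [← map_inv, ← map_mul, ← map_mul] at hmem
    rw [cg_pair] at hmem
    rw [he0, pow_two]
    exact hmem
  -- derive e0 ∈ H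
  have he0H : SemidirectProduct.inl e0 ∈ H := by
    obtain ⟨t, htle, hr⟩ := hodd
    rcases Nat.eq_zero_or_pos t with ht0 | ht1
    · rw [ht0] at hr
      simpa using hr
    · have h2 := hsq (by omega)
      have hmem := H.mul_mem hr (H.inv_mem (H.pow_mem h2 t))
      rw [← map_pow, ← map_inv, ← map_mul] at hmem
      rwa [show e0^(2*t+1) * ((e0^2)^t)⁻¹ = e0 by group] at hmem
  -- all single vectors
  have hsingle : ∀ (i : Fin (m+2)) (c : ZMod d),
      SemidirectProduct.inl (Pi.mulSingle i (Multiplicative.ofAdd c)) ∈ H := by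
    intro i c
    have h1 : SemidirectProduct.inl
        (Pi.mulSingle i (Multiplicative.ofAdd (1 : ZMod d))) ∈ H := by
      have := hconj _ he0H (swap 0 i)
      rwa [he0, wreathAct_mulSingle, Equiv.swap_apply_left] at this
    have h2 := H.pow_mem h1 c.val
    rw [← map_pow, ← Pi.mulSingle_pow, ← ofAdd_nsmul, nsmul_eq_mul, mul_one] at h2
    rwa [ZMod.natCast_rightInverse c] at h2
  -- all vectors
  have hvec : ∀ w : Fin (m+2) → Multiplicative (ZMod d), SemidirectProduct.inl w ∈ H := by
    intro w
    have hvec0 : ∀ (t : Finset (Fin (m+2))),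
        SemidirectProduct.inl (∏ i ∈ t, Pi.mulSingle i (w i)) ∈ H := by
      intro t
      induction t using Finset.induction_on with
      | empty =>
        rw [Finset.prod_empty, map_one]
        exact H.one_mem
      | @insert a t hnot ih =>
        rw [Finset.prod_insert hnot, map_mul]
        exact H.mul_mem (hsingle a (Multiplicative.toAdd (w a))) ih
    have := hvec0 Finset.univ
    rwa [Finset.univ_prod_mulSingle w] at this
  -- conclude
  rw [eq_top_iff]
  intro g _
  rw [← SemidirectProduct.inl_left_mul_inr_right g]
  refine H.mul_mem (hvec g.left) ?_
  obtain ⟨h, hh, hr⟩ := hsurj g.right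
  have : SemidirectProduct.inr g.right = (SemidirectProduct.inl h.left)⁻¹ * h := by
    rw [← hr]
    nth_rewrite 3 [← SemidirectProduct.inl_left_mul_inr_right h]
    rw [inv_mul_cancel_left]
  rw [this]
  exact H.mul_mem (H.inv_mem (hvec h.left)) hh
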